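/- Let b ∈ (0,1), t ∈ ℝ and η ∈ ℤ. Then there is a constant C=C(b)>0 such that for every x ≠ 0, the Stein fractional derivative of the function ξ ↦ e^{it·sign(ξ)η²} satisfies 𝒟^b_ξ(e^{it·sign(ξ)η²})(x) ≤ C · min{1, |t|η²} · |x|^{-b}. -/

import Mathlib

open MeasureTheory Real Set
open scoped ENNReal

noncomputable section

/-- The Stein fractional derivative of order `b` of a function `g : ℝ → ℂ`:
`𝒟^b g(x) = (∫_ℝ |g(x)-g(z)|²/|x-z|^{1+2b} dz)^{1/2}`. -/
def steinD (b : ℝ) (g : ℝ → ℂ) (x : ℝ) : ℝ :=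
  (∫ z : ℝ, ‖g x - g z‖ ^ 2 / |x - z| ^ (1 + 2 * b)) ^ ((1 : ℝ) / 2)

lemma measurable_real_sign : Measurable Real.sign := by
  unfold Real.sign
  exact Measurable.ite (measurableSet_lt measurable_id measurable_const) measurable_const
    (Measurable.ite (measurableSet_lt measurable_const measurable_id) measurable_const
      measurable_const)

lemma norm_exp_I_mul_sub_one (θ : ℝ) :
    ‖Complex.exp (Complex.I * (θ : ℂ)) - 1‖ ≤ |θ| := by
  have hz : Complex.exp (Complex.I * (θ : ℂ)) - 1
      = Complex.mk (Real.cos θ - 1) (Real.sin θ) := by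
    rw [mul_comm, Complex.exp_mul_I]
    apply Complex.ext <;>
      simp [Complex.cos_ofReal_re, Complex.sin_ofReal_re]
  have hsq : ‖Complex.exp (Complex.I * (θ : ℂ)) - 1‖ ^ 2 ≤ θ ^ 2 := by
    rw [hz, Complex.sq_norm, Complex.normSq_mk]
    have h1 : (Real.cos θ - 1) * (Real.cos θ - 1) + Real.sin θ * Real.sin θ
        = 2 - 2 * Real.cos θ := by
      have := Real.sin_sq_add_cos_sq θ
      nlinarith
    have h2 : Real.sin (θ / 2) ^ 2 = (1 - Real.cos θ) / 2 := by
      have hcc := Real.cos_two_mul (θ / 2)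
      rw [show 2 * (θ / 2) = θ by ring] at hcc
      have := Real.sin_sq_add_cos_sq (θ / 2)
      nlinarith
    have h3 : Real.sin (θ / 2) ^ 2 ≤ (θ / 2) ^ 2 := by
      rw [← sq_abs (Real.sin _), ← sq_abs (θ / 2)]
      exact pow_le_pow_left₀ (abs_nonneg _) (Real.abs_sin_le_abs) 2
    nlinarith
  calc ‖Complex.exp (Complex.I * (θ : ℂ)) - 1‖
      = Real.sqrt (‖Complex.exp (Complex.I * (θ : ℂ)) - 1‖ ^ 2) := by
        rw [Real.sqrt_sq (norm_nonneg _)]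
    _ ≤ Real.sqrt (θ ^ 2) := Real.sqrt_le_sqrt hsq
    _ = |θ| := Real.sqrt_sq_eq_abs θ

lemma norm_exp_I_mul_sub_exp_I_mul (α β : ℝ) :
    ‖Complex.exp (Complex.I * (α : ℂ)) - Complex.exp (Complex.I * (β : ℂ))‖
      ≤ min 2 |α - β| := by
  refine le_min ?_ ?_
  · have h1 : ‖Complex.exp (Complex.I * (α : ℂ))‖ = 1 := by
      rw [Complex.norm_exp]; simp
    have h2 : ‖Complex.exp (Complex.I * (β : ℂ))‖ = 1 := by
      rw [Complex.norm_exp]; simp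
    calc ‖Complex.exp (Complex.I * (α : ℂ)) - Complex.exp (Complex.I * (β : ℂ))‖
        ≤ ‖Complex.exp (Complex.I * (α : ℂ))‖ + ‖Complex.exp (Complex.I * (β : ℂ))‖ :=
          norm_sub_le _ _
      _ = 2 := by rw [h1, h2]; norm_num
  · have key : Complex.exp (Complex.I * (α : ℂ)) - Complex.exp (Complex.I * (β : ℂ))
        = Complex.exp (Complex.I * (β : ℂ))
          * (Complex.exp (Complex.I * ((α - β : ℝ) : ℂ)) - 1) := by
      rw [mul_sub, mul_one, ← Complex.exp_add]
      push_cast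
      ring_nf
    rw [key, norm_mul]
    have h2 : ‖Complex.exp (Complex.I * (β : ℂ))‖ = 1 := by
      rw [Complex.norm_exp]; simp
    rw [h2, one_mul]
    exact norm_exp_I_mul_sub_one (α - β)

/-- **Lemma 2.5, inequality (2.9)**: for `b ∈ (0,1)` there is `C = C(b) > 0` such that
for all `t ∈ ℝ`, `η ∈ ℤ` and `x ≠ 0`, the Stein fractional derivative of
`ξ ↦ e^{it·sign(ξ)·η²}` satisfies
`𝒟^b_ξ(e^{it sign(ξ)η²})(x) ≤ C · min{1, |t|η²} · |x|^{-b}`. -/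
theorem stein_derivative_sign_exponential_bound (b : ℝ) (hb₁ : 0 < b) (hb₂ : b < 1) :
    ∃ C : ℝ, 0 < C ∧ ∀ (t : ℝ) (η : ℤ) (x : ℝ), x ≠ 0 →
      steinD b
          (fun ξ : ℝ => Complex.exp (Complex.I * ((t * Real.sign ξ * (η : ℝ) ^ 2 : ℝ) : ℂ))) x ≤
        C * min 1 (|t| * (η : ℝ) ^ 2) * |x| ^ (-b) := by
  refine ⟨(4 / b) ^ ((1 : ℝ) / 2), Real.rpow_pos_of_pos (by positivity) _, ?_⟩
  intro t η x hx
  set m : ℝ := min 1 (|t| * (η : ℝ) ^ 2) with hm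
  have hm0 : 0 ≤ m := le_min zero_le_one (by positivity)
  set a : ℝ := |x| with ha
  have ha0 : 0 < a := abs_pos.mpr hx
  set c : ℝ := -(1 + 2 * b) with hc
  have hc1 : c < -1 := by rw [hc]; linarith
  set g : ℝ → ℂ :=
    fun ξ : ℝ => Complex.exp (Complex.I * ((t * Real.sign ξ * (η : ℝ) ^ 2 : ℝ) : ℂ)) with hg
  set F : ℝ → ℝ := Set.indicator (Ici a) (fun r => r ^ c) with hF
  have hF_nonneg : ∀ r, 0 ≤ F r := fun r =>
    Set.indicator_nonneg (fun s hs => Real.rpow_nonneg (le_trans ha0.le hs) _) r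
  have hF_int : Integrable F := by
    rw [hF, integrable_indicator_iff measurableSet_Ici]
    rw [integrableOn_Ici_iff_integrableOn_Ioi]
    exact integrableOn_Ioi_rpow_of_lt hc1 ha0
  have hF_abs : ∀ u : ℝ, F |u| = F u + F (-u) := by
    intro u
    rcases le_or_gt a u with h | h
    · have h1 : (-u) ∉ Ici a := by
        simp only [mem_Ici, not_le]; linarith
      rw [abs_of_nonneg (le_trans ha0.le h), hF,
        Set.indicator_of_notMem h1, add_zero]
    rcases le_or_gt a (-u) with h2 | h2
    · have hu : u < 0 := by linarith
      have h1 : u ∉ Ici a := by simp only [mem_Ici, not_le]; exact h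
      rw [abs_of_neg hu, hF, Set.indicator_of_notMem h1, zero_add]
    · have h3 : |u| ∉ Ici a := by
        simp only [mem_Ici, not_le]
        exact abs_lt.mpr ⟨by linarith, h⟩
      have h1 : u ∉ Ici a := by simp only [mem_Ici, not_le]; exact h
      have h2' : (-u) ∉ Ici a := by simp only [mem_Ici, not_le]; exact h2
      rw [hF, Set.indicator_of_notMem h3, Set.indicator_of_notMem h1,
        Set.indicator_of_notMem h2', add_zero]
  have habs_int : Integrable (fun u : ℝ => F |u|) := by
    have heq : (fun u : ℝ => F |u|) = fun u => F u + F (-u) := funext hF_abs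
    rw [heq]
    exact hF_int.add hF_int.comp_neg
  set h : ℝ → ℝ := fun z => 4 * m ^ 2 * F |x - z| with hh
  have hh_int : Integrable h := (habs_int.comp_sub_left x).const_mul _
  have hgm : Measurable g := by
    apply Complex.measurable_exp.comp
    apply Measurable.const_mul
    exact Complex.measurable_ofReal.comp
      (((measurable_const.mul measurable_real_sign).mul measurable_const))
  have hfm : AEStronglyMeasurable
      (fun z : ℝ => ‖g x - g z‖ ^ 2 / |x - z| ^ (1 + 2 * b)) volume := by
    apply Measurable.aestronglyMeasurable
    apply Measurable.div
    · exact ((measurable_const.sub hgm).norm.pow_const 2)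
    · fun_prop
  have hbound : ∀ z : ℝ, ‖g x - g z‖ ^ 2 / |x - z| ^ (1 + 2 * b) ≤ h z := by
    intro z
    by_cases hsz : Real.sign z = Real.sign x
    · have hzero : g x - g z = 0 := by rw [hg]; simp [hsz]
      rw [hzero]
      simp only [norm_zero, ne_eq, OfNat.ofNat_ne_zero, not_false_eq_true, zero_pow, zero_div]
      exact mul_nonneg (by positivity) (hF_nonneg _)
    · have hxz : a ≤ |x - z| := by
        rcases hx.lt_or_gt with hxneg | hxpos
        · have hz : 0 ≤ z := by
            by_contra hzc
            push_neg at hzc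
            exact hsz (by rw [Real.sign_of_neg hzc, Real.sign_of_neg hxneg])
          rw [ha, abs_of_nonpos (by linarith : x - z ≤ 0), abs_of_neg hxneg]
          linarith
        · have hz : z ≤ 0 := by
            by_contra hzc
            push_neg at hzc
            exact hsz (by rw [Real.sign_of_pos hzc, Real.sign_of_pos hxpos])
          rw [ha, abs_of_pos hxpos, abs_of_nonneg (by linarith : (0:ℝ) ≤ x - z)]
          linarith
      have hFeq : F |x - z| = |x - z| ^ c := Set.indicator_of_mem hxz _
      have hpos : (0:ℝ) < |x - z| := lt_of_lt_of_le ha0 hxz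
      have hnorm : ‖g x - g z‖ ≤ 2 * m := by
        have h1 := norm_exp_I_mul_sub_exp_I_mul (t * Real.sign x * (η : ℝ) ^ 2)
          (t * Real.sign z * (η : ℝ) ^ 2)
        have hΔ : |t * Real.sign x * (η : ℝ) ^ 2 - t * Real.sign z * (η : ℝ) ^ 2|
            ≤ 2 * (|t| * (η : ℝ) ^ 2) := by
          have he : t * Real.sign x * (η : ℝ) ^ 2 - t * Real.sign z * (η : ℝ) ^ 2
              = t * (η : ℝ) ^ 2 * (Real.sign x - Real.sign z) := by ring
          rw [he, abs_mul, abs_mul]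
          have hsx : |Real.sign x - Real.sign z| ≤ 2 := by
            have h1 : |Real.sign x| ≤ 1 := by
              rcases lt_trichotomy x 0 with h' | h' | h'
              · rw [Real.sign_of_neg h']; norm_num
              · rw [h', Real.sign_zero]; norm_num
              · rw [Real.sign_of_pos h']; norm_num
            have h2 : |Real.sign z| ≤ 1 := by
              rcases lt_trichotomy z 0 with h' | h' | h'
              · rw [Real.sign_of_neg h']; norm_num
              · rw [h', Real.sign_zero]; norm_num
              · rw [Real.sign_of_pos h']; norm_num
            calc |Real.sign x - Real.sign z| ≤ |Real.sign x| + |Real.sign z| := abs_sub _ _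
              _ ≤ 2 := by linarith
          have habs2 : |(η : ℝ) ^ 2| = (η : ℝ) ^ 2 := abs_of_nonneg (sq_nonneg _)
          calc |t| * |(η : ℝ) ^ 2| * |Real.sign x - Real.sign z|
              ≤ |t| * |(η : ℝ) ^ 2| * 2 := by
                apply mul_le_mul_of_nonneg_left hsx (by positivity)
            _ = 2 * (|t| * (η : ℝ) ^ 2) := by rw [habs2]; ring
        have hmin : min 2 |t * Real.sign x * (η : ℝ) ^ 2 - t * Real.sign z * (η : ℝ) ^ 2|
            ≤ 2 * m := by
          rcases le_total (|t| * (η : ℝ) ^ 2) 1 with hle | hle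
          · rw [hm, min_eq_right hle]
            exact le_trans (min_le_right _ _) hΔ
          · rw [hm, min_eq_left hle, mul_one]
            exact min_le_left _ _
        exact le_trans h1 hmin
      calc ‖g x - g z‖ ^ 2 / |x - z| ^ (1 + 2 * b)
          ≤ (2 * m) ^ 2 / |x - z| ^ (1 + 2 * b) := by
            have hp2 : ‖g x - g z‖ ^ 2 ≤ (2 * m) ^ 2 :=
              pow_le_pow_left₀ (norm_nonneg _) hnorm 2
            gcongr
        _ = 4 * m ^ 2 * |x - z| ^ c := by
            rw [hc, Real.rpow_neg (abs_nonneg _), div_eq_mul_inv]; ring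
        _ = h z := by simp only [hh, hFeq]
  have hf_nonneg : ∀ z : ℝ, 0 ≤ ‖g x - g z‖ ^ 2 / |x - z| ^ (1 + 2 * b) := by
    intro z; positivity
  have hf_int : Integrable (fun z : ℝ => ‖g x - g z‖ ^ 2 / |x - z| ^ (1 + 2 * b)) := by
    apply hh_int.mono' hfm
    filter_upwards with z
    rw [Real.norm_eq_abs, abs_of_nonneg (hf_nonneg z)]
    exact hbound z
  have hint : ∫ z : ℝ, ‖g x - g z‖ ^ 2 / |x - z| ^ (1 + 2 * b) ≤ ∫ z : ℝ, h z :=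
    integral_mono hf_int hh_int hbound
  have hIoi : ∫ r in Ioi (0:ℝ), F r = a ^ (-(2*b)) / (2*b) := by
    have hsub : Ici a ∩ Ioi (0:ℝ) = Ici a :=
      inter_eq_self_of_subset_left fun r hr => lt_of_lt_of_le ha0 hr
    rw [hF, integral_indicator measurableSet_Ici,
      Measure.restrict_restrict measurableSet_Ici, hsub,
      integral_Ici_eq_integral_Ioi, integral_Ioi_rpow_of_lt hc1 ha0, hc,
      show -(1 + 2*b) + 1 = -(2*b) by ring, neg_div, div_neg, neg_neg]
  have hH : ∫ z : ℝ, h z = 4 / b * (m ^ 2 * a ^ (-(2*b))) := by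
    rw [hh]
    rw [integral_const_mul]
    rw [show (∫ z : ℝ, F |x - z|) = ∫ u : ℝ, F |u| from
      integral_sub_left_eq_self (fun u => F |u|) volume x]
    rw [integral_comp_abs (f := F), hIoi]
    field_simp
  have hQ : steinD b g x ≤ (4 / b * (m ^ 2 * a ^ (-(2*b)))) ^ ((1:ℝ)/2) := by
    rw [steinD]
    apply Real.rpow_le_rpow (integral_nonneg hf_nonneg) _ (by norm_num)
    exact hint.trans_eq hH
  have hR : (4 / b * (m ^ 2 * a ^ (-(2*b)))) ^ ((1:ℝ)/2)
      = (4 / b) ^ ((1:ℝ)/2) * m * a ^ (-b) := by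
    rw [Real.mul_rpow (by positivity) (by positivity),
      Real.mul_rpow (by positivity) (by positivity)]
    rw [← Real.rpow_natCast m 2, ← Real.rpow_mul hm0, ← Real.rpow_mul (abs_nonneg x)]
    norm_num
    ring_nf
    rw [ha]
  rw [hR] at hQ
  exact hQ
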